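/- If A is an n×n complex matrix all of whose eigenvalues have negative real part, then every solution of Y' = AY tends to 0 as x → ∞. -/

import Mathlib

open Filter Topology

attribute [local instance] Matrix.linftyOpNormedAddCommGroup Matrix.linftyOpNormedRing
  Matrix.linftyOpNormedAlgebra

namespace AsympAux

open NormedSpace
open scoped Nat

lemma scalar_decay (b : ℝ) (hb : b < 0) (k : ℕ) :
    Tendsto (fun x : ℝ => x ^ k * Real.exp (b * x)) atTop (𝓝 0) := by
  have h2 : Tendsto (fun x : ℝ => (-b) * x) atTop atTop :=
    Tendsto.const_mul_atTop (by linarith) tendsto_id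
  have h3 := (Real.tendsto_pow_mul_exp_neg_atTop_nhds_zero k).comp h2
  have h4 := h3.const_mul (((-b) ^ k)⁻¹)
  rw [mul_zero] at h4
  refine h4.congr fun x => ?_
  have hbk : ((-b) ^ k) ≠ 0 := pow_ne_zero _ (by linarith)
  simp only [Function.comp_apply]
  rw [mul_pow, neg_mul, neg_neg, ← mul_assoc, ← mul_assoc, inv_mul_cancel₀ hbk, one_mul]

variable {n : ℕ}

lemma exp_split (A : Matrix (Fin n) (Fin n) ℂ) (μ : ℂ) (x : ℝ) :
    exp (x • A) = Complex.exp (x * μ) • exp ((x : ℂ) • (A - μ • 1)) := by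
  have h1 : x • A = ((x : ℂ) * μ) • (1 : Matrix (Fin n) (Fin n) ℂ)
      + (x : ℂ) • (A - μ • 1) := by
    rw [smul_sub, ← smul_assoc, smul_eq_mul, ← algebraMap_smul ℂ x A]
    simp [Algebra.algebraMap_eq_smul_one]
  have hc : Commute (((x : ℂ) * μ) • (1 : Matrix (Fin n) (Fin n) ℂ))
      ((x : ℂ) • (A - μ • 1)) := (Commute.one_left _).smul_left _
  rw [h1, Matrix.exp_add_of_commute _ _ hc]
  have : exp (((x : ℂ) * μ) • (1 : Matrix (Fin n) (Fin n) ℂ))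
      = Complex.exp ((x : ℂ) * μ) • (1 : Matrix (Fin n) (Fin n) ℂ) := by
    have hc' := algebraMap_exp_comm (𝔸 := Matrix (Fin n) (Fin n) ℂ) ((x : ℂ) * μ)
    rw [← Algebra.algebraMap_eq_smul_one,
      ← Algebra.algebraMap_eq_smul_one, Complex.exp_eq_exp_ℂ]
    exact hc'.symm
  rw [this, smul_mul_assoc, one_mul]

lemma exp_mulVec_eq_sum (N : Matrix (Fin n) (Fin n) ℂ) (v : Fin n → ℂ) (k : ℕ)
    (hv : (N ^ k).mulVec v = 0) (x : ℂ) :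
    (exp (x • N)).mulVec v
      = ∑ j ∈ Finset.range k, ((x ^ j * (j ! : ℂ)⁻¹)) • (N ^ j).mulVec v := by
  classical
  let L : Matrix (Fin n) (Fin n) ℂ →ₗ[ℂ] (Fin n → ℂ) :=
    { toFun := fun M => M.mulVec v
      map_add' := fun M P => Matrix.add_mulVec M P v
      map_smul' := fun c M => Matrix.smul_mulVec c M v }
  let Lc : Matrix (Fin n) (Fin n) ℂ →L[ℂ] (Fin n → ℂ) := LinearMap.toContinuousLinearMap L
  have hL : ∀ M, Lc M = M.mulVec v := fun _ => rfl
  have hsum := expSeries_summable' (𝕂 := ℂ) (x • N)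
  rw [exp_eq_tsum ℂ, ← hL, Lc.map_tsum hsum]
  have hterm : ∀ j : ℕ, Lc (((j ! : ℂ))⁻¹ • (x • N) ^ j)
      = (x ^ j * ((j ! : ℂ))⁻¹) • (N ^ j).mulVec v := by
    intro j
    rw [map_smul, smul_pow, map_smul, hL, smul_smul, mul_comm]
  rw [funext hterm]
  refine tsum_eq_sum fun j hj => ?_
  have hjk : k ≤ j := by simpa using hj
  have : (N ^ j).mulVec v = 0 := by
    have : N ^ j = N ^ (j - k) * N ^ k := by
      rw [← pow_add]
      congr 1
      omega
    rw [this, ← Matrix.mulVec_mulVec, hv, Matrix.mulVec_zero]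
  rw [this, smul_zero]

lemma decay (A : Matrix (Fin n) (Fin n) ℂ) (μ : ℂ) (hμ : μ.re < 0) (v : Fin n → ℂ)
    (k : ℕ) (hv : ((A - μ • 1) ^ k).mulVec v = 0) :
    Tendsto (fun x : ℝ => (exp (x • A)).mulVec v) atTop (𝓝 0) := by
  have heq : ∀ x : ℝ, (exp (x • A)).mulVec v
      = ∑ j ∈ Finset.range k,
          (Complex.exp ((x : ℂ) * μ) * ((x : ℂ) ^ j * (j ! : ℂ)⁻¹))
            • ((A - μ • 1) ^ j).mulVec v := by
    intro x
    rw [exp_split A μ x, Matrix.smul_mulVec,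
      exp_mulVec_eq_sum (A - μ • 1) v k hv (x : ℂ), Finset.smul_sum]
    simp_rw [smul_smul]
  rw [show (0 : Fin n → ℂ) = ∑ j ∈ Finset.range k,
      (0 : ℂ) • ((A - μ • 1) ^ j).mulVec v by simp]
  refine Tendsto.congr (fun x => (heq x).symm) ?_
  refine tendsto_finset_sum _ fun j _ => ?_
  refine Tendsto.smul_const ?_ _
  rw [tendsto_zero_iff_norm_tendsto_zero]
  have hbound : ∀ᶠ x : ℝ in atTop,
      ‖Complex.exp ((x : ℂ) * μ) * ((x : ℂ) ^ j * (j ! : ℂ)⁻¹)‖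
        = (x ^ j * Real.exp (μ.re * x)) * (j ! : ℝ)⁻¹ := by
    filter_upwards [eventually_ge_atTop (0 : ℝ)] with x hx
    rw [norm_mul, norm_mul, Complex.norm_exp]
    have h1 : ((x : ℂ) * μ).re = μ.re * x := by simp [Complex.mul_re]; ring
    rw [h1]
    simp only [norm_pow, Complex.norm_real, Real.norm_eq_abs, norm_inv,
      Complex.norm_natCast]
    rw [abs_of_nonneg hx]
    ring
  have h0 := (scalar_decay μ.re hμ j).mul_const ((j ! : ℝ)⁻¹)
  rw [zero_mul] at h0
  refine Tendsto.congr' ?_ h0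
  filter_upwards [hbound] with x hx
  exact hx.symm

lemma repr (A : Matrix (Fin n) (Fin n) ℂ) (Y : ℝ → Fin n → ℂ)
    (hY : ∀ x, HasDerivAt Y (A.mulVec (Y x)) x) (x : ℝ) :
    Y x = (exp (x • A)).mulVec (Y 0) := by
  classical
  set g : ℝ → Matrix (Fin n) (Fin n) ℂ := fun t => exp (t • (-A)) with hgdef
  have hg : ∀ t, HasDerivAt g (g t * (-A)) t := fun t => hasDerivAt_exp_smul_const (-A) t
  have hgij : ∀ (i j : Fin n) (t : ℝ), HasDerivAt (fun u => g u i j) ((g t * (-A)) i j) t := by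
    intro i j t
    let L : Matrix (Fin n) (Fin n) ℂ →ₗ[ℝ] ℂ :=
      { toFun := fun M => M i j, map_add' := fun _ _ => rfl, map_smul' := fun _ _ => rfl }
    exact (LinearMap.toContinuousLinearMap L).hasFDerivAt.comp_hasDerivAt t (hg t)
  have hYj : ∀ (j : Fin n) (t : ℝ), HasDerivAt (fun u => Y u j) (A.mulVec (Y t) j) t := by
    intro j t
    exact (ContinuousLinearMap.proj j : (Fin n → ℂ) →L[ℝ] ℂ).hasFDerivAt.comp_hasDerivAt
      t (hY t)
  have hmv : ∀ (M : Matrix (Fin n) (Fin n) ℂ) (w : Fin n → ℂ) (i : Fin n),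
      M.mulVec w i = ∑ j, M i j * w j := fun M w i => rfl
  have hZ0 : ∀ (i : Fin n) (t : ℝ), HasDerivAt (fun u => ∑ j, g u i j * Y u j) 0 t := by
    intro i t
    have h := HasDerivAt.fun_sum (fun j (_ : j ∈ Finset.univ) => (hgij i j t).mul (hYj j t))
    convert h using 1
    · rfl
    · rfl
    rw [Finset.sum_add_distrib, ← hmv (g t * (-A)) (Y t) i]
    have e2 : ∑ j, g t i j * A.mulVec (Y t) j = ((g t) * A).mulVec (Y t) i := by
      rw [← hmv (g t) (A.mulVec (Y t)) i, Matrix.mulVec_mulVec]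
    rw [e2, mul_neg, Matrix.neg_mulVec]
    simp
  have hconst : ∀ (i : Fin n) (t : ℝ), (∑ j, g t i j * Y t j) = ∑ j, g 0 i j * Y 0 j := by
    intro i t
    refine is_const_of_deriv_eq_zero (fun u => (hZ0 i u).differentiableAt) ?_ t 0
    intro u
    exact (hZ0 i u).deriv
  have hZval : ∀ t, (g t).mulVec (Y t) = Y 0 := by
    intro t
    funext i
    rw [hmv, hconst i t, ← hmv]
    simp [hgdef, exp_zero, Matrix.one_mulVec]
  have hinv : exp (x • A) * g x = 1 := by
    rw [hgdef, ← Matrix.exp_add_of_commute]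
    · rw [← smul_add, add_neg_cancel, smul_zero, exp_zero]
    · exact ((Commute.refl A).neg_right).smul_left x |>.smul_right x
  calc Y x = (exp (x • A) * g x).mulVec (Y x) := by rw [hinv, Matrix.one_mulVec]
    _ = (exp (x • A)).mulVec ((g x).mulVec (Y x)) := by rw [Matrix.mulVec_mulVec]
    _ = (exp (x • A)).mulVec (Y 0) := by rw [hZval x]

end AsympAux

theorem asymptotic_stability (n : ℕ) (A : Matrix (Fin n) (Fin n) ℂ)
    (hA : ∀ μ ∈ spectrum ℂ A, μ.re < 0)
    (Y : ℝ → Fin n → ℂ) (hY : ∀ x, HasDerivAt Y (A.mulVec (Y x)) x) :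
    Tendsto Y atTop (𝓝 0) := by
  classical
  have hrep := AsympAux.repr A Y hY
  set f : Module.End ℂ (Fin n → ℂ) := Matrix.toLinAlgEquiv' A with hf
  have hfpow : ∀ (μ : ℂ) (k : ℕ) (v : Fin n → ℂ),
      ((f - μ • 1) ^ k) v = ((A - μ • 1) ^ k).mulVec v := by
    intro μ k v
    have h1 : f - μ • 1 = Matrix.toLinAlgEquiv' (A - μ • 1) := by
      rw [map_sub, map_smul, map_one, hf]
    rw [h1, ← map_pow, Matrix.toLinAlgEquiv'_apply]
  have key : ∀ v : Fin n → ℂ,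
      Tendsto (fun x : ℝ => (NormedSpace.exp (x • A)).mulVec v) atTop (𝓝 0) := by
    have htop := Module.End.iSup_maxGenEigenspace_eq_top f
    intro v
    have hmem : v ∈ ⨆ μ : ℂ, f.maxGenEigenspace μ := htop ▸ Submodule.mem_top
    refine Submodule.iSup_induction _
      (motive := fun v => Tendsto (fun x : ℝ => (NormedSpace.exp (x • A)).mulVec v)
        atTop (𝓝 0)) hmem ?_ ?_ ?_
    · intro μ w hw
      by_cases hw0 : w = 0
      · simpa [hw0, Matrix.mulVec_zero] using
          (tendsto_const_nhds : Tendsto (fun _ : ℝ => (0 : Fin n → ℂ)) atTop (𝓝 0))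
      obtain ⟨k, hk⟩ := (Module.End.mem_maxGenEigenspace f μ w).mp hw
      have hk' : ((A - μ • 1) ^ k).mulVec w = 0 := by rw [← hfpow]; exact hk
      have hkne : k ≠ 0 := by
        rintro rfl
        simp only [pow_zero, Module.End.one_apply] at hk
        exact hw0 hk
      have hval : f.HasGenEigenvalue μ k := by
        rw [Module.End.hasGenEigenvalue_iff]
        refine Submodule.ne_bot_iff _ |>.mpr ⟨w, ?_, hw0⟩
        rw [Module.End.mem_genEigenspace_nat]
        exact hk
      have hspec : μ ∈ spectrum ℂ A := by
        have := (Module.End.hasEigenvalue_of_hasGenEigenvalue hval).mem_spectrum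
        rwa [hf, AlgEquiv.spectrum_eq] at this
      exact AsympAux.decay A μ (hA μ hspec) w k hk'
    · simpa [Matrix.mulVec_zero] using
        (tendsto_const_nhds : Tendsto (fun _ : ℝ => (0 : Fin n → ℂ)) atTop (𝓝 0))
    · intro a b ha hb
      have := ha.add hb
      rw [add_zero] at this
      refine this.congr fun x => ?_
      rw [Matrix.mulVec_add]
  refine Tendsto.congr (fun x => (hrep x).symm) (key (Y 0))
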